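/- Let f : X → X be a minimal map on a finitely Suslinean continuum X not reduced to a point. Define x 𝓡 y iff there is a subcontinuum C containing x and y with diam(f^n(C)) → 0. Then 𝓡 is a closed, f-invariant equivalence relation whose classes are subcontinua (in particular the quotient map is monotone). -/

import Mathlib

open Metric Filter Topology Set

section Defs
variable {X Y : Type*}

/-- Factor map (semi-conjugacy): continuous surjection intertwining the dynamics. -/
def IsFactorMap [TopologicalSpace X] [TopologicalSpace Y]
    (f : X → X) (g : Y → Y) (π : X → Y) : Prop :=
  Continuous π ∧ Function.Surjective π ∧ π ∘ f = g ∘ π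

/-- Monotone map: the preimage of every point is connected. -/
def MonotoneFibers [TopologicalSpace X] [TopologicalSpace Y] (π : X → Y) : Prop :=
  ∀ y : Y, IsConnected (π ⁻¹' {y})

/-- Minimal map: continuous, and no proper nonempty closed invariant subset. -/
def MinimalMap [TopologicalSpace X] (f : X → X) : Prop :=
  Continuous f ∧ ∀ M : Set X, IsClosed M → M.Nonempty → MapsTo f M M → M = univ

/-- Topological transitivity. -/
def TransitiveMap [TopologicalSpace X] (f : X → X) : Prop :=
  ∀ U V : Set X, IsOpen U → IsOpen V → U.Nonempty → V.Nonempty →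
    ∃ n : ℕ, ((f^[n]) '' U ∩ V).Nonempty

/-- Weak mixing: the product system is transitive. -/
def WeaklyMixing [TopologicalSpace X] (f : X → X) : Prop :=
  TransitiveMap (fun p : X × X => (f p.1, f p.2))

/-- Regionally proximal pairs. -/
def RPplus [MetricSpace X] (f : X → X) (x y : X) : Prop :=
  ∀ ε > (0 : ℝ), ∀ Ox Oy : Set X, IsOpen Ox → IsOpen Oy → x ∈ Ox → y ∈ Oy →
    ∃ x' ∈ Ox, ∃ y' ∈ Oy, ∃ n : ℕ, dist (f^[n] x') (f^[n] y') < ε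

/-- Negatively regionally proximal pairs. -/
def RPminus [MetricSpace X] (f : X → X) (x y : X) : Prop :=
  ∃ (xs ys : ℕ → X) (m : ℕ → ℕ),
    Tendsto m atTop atTop ∧
    Tendsto (fun n => dist (xs n) (ys n)) atTop (𝓝 0) ∧
    Tendsto (fun n => f^[m n] (xs n)) atTop (𝓝 x) ∧
    Tendsto (fun n => f^[m n] (ys n)) atTop (𝓝 y)

/-- `x` and `y` are identified by the maximal equicontinuous factor, i.e.
they are identified by every equicontinuous factor of `(X, f)`. -/
def SeqRel [MetricSpace X] (f : X → X) (x y : X) : Prop :=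
  ∀ (Y : Type) (_ : MetricSpace Y) (_ : CompactSpace Y) (g : Y → Y) (π : X → Y),
    Continuous g → Equicontinuous (fun n : ℕ => g^[n]) →
    IsFactorMap f g π → π x = π y

/-- A null family: for each ε > 0 only finitely many members have diameter ≥ ε. -/
def NullFamily [MetricSpace X] {ι : Type*} (A : ι → Set X) : Prop :=
  ∀ ε > (0 : ℝ), {i | ε ≤ diam (A i)}.Finite

/-- Finitely Suslinean: every pairwise disjoint family of subcontinua is null. -/
def FinitelySuslinean (X : Type*) [MetricSpace X] : Prop :=
  ∀ (ι : Type) (A : ι → Set X),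
    (∀ i, (A i).Nonempty ∧ IsCompact (A i) ∧ IsConnected (A i)) →
    Pairwise (Function.onFun Disjoint A) → NullFamily A

/-- Suslinean: every pairwise disjoint family of nondegenerate subcontinua is countable. -/
def Suslinean (X : Type*) [MetricSpace X] : Prop :=
  ∀ S : Set (Set X),
    (∀ A ∈ S, IsCompact A ∧ IsConnected A ∧ A.Nontrivial) →
    S.Pairwise Disjoint → S.Countable

/-- Hereditarily locally connected: every subcontinuum is locally connected. -/
def HereditarilyLocallyConnected (X : Type*) [TopologicalSpace X] : Prop :=
  ∀ A : Set X, IsCompact A → IsConnected A → LocallyConnectedSpace A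

/-- Homogeneous space: the homeomorphism group acts transitively. -/
def HomogeneousSpace (X : Type*) [TopologicalSpace X] : Prop :=
  ∀ x y : X, ∃ h : X ≃ₜ X, h x = y

/-- Mesh of a set: supremum of diameters of its connected components. -/
noncomputable def Mesh [MetricSpace X] (B : Set X) : ℝ :=
  ⨆ x : B, diam (connectedComponentIn B (x : X))

/-- Positively continuum-wise expansive map. -/
def PosCWExpansive [MetricSpace X] (f : X → X) : Prop :=
  ∃ c > (0 : ℝ), ∀ A : Set X, IsCompact A → IsConnected A → A.Nontrivial →
    ∃ n : ℕ, c < diam (f^[n] '' A)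

/-- Minimal set of a map. -/
def IsMinimalSet [TopologicalSpace X] (f : X → X) (M : Set X) : Prop :=
  IsClosed M ∧ M.Nonempty ∧ MapsTo f M M ∧
    ∀ N ⊆ M, IsClosed N → N.Nonempty → MapsTo f N N → N = M

/-- Rotation of the circle by angle `2πα`. -/
noncomputable def circleRotation (α : ℝ) : Circle → Circle :=
  fun z => Circle.exp (2 * Real.pi * α) * z

end Defs

section Aux
variable {X : Type*} [MetricSpace X]

private def ShrGood (f : X → X) (C : Set X) : Prop :=
  IsCompact C ∧ IsConnected C ∧ Tendsto (fun n => diam (f^[n] '' C)) atTop (𝓝 0)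

private def ShrRel (f : X → X) (x y : X) : Prop := ∃ C, ShrGood f C ∧ x ∈ C ∧ y ∈ C

private lemma good_singleton (f : X → X) (x : X) : ShrGood f {x} := by
  refine ⟨isCompact_singleton, isConnected_singleton, ?_⟩
  have : (fun n => diam (f^[n] '' {x})) = fun _ => (0:ℝ) := by
    funext n; simp [Set.image_singleton]
  rw [this]; exact tendsto_const_nhds

private lemma good_union {f : X → X} {C D : Set X} (hC : ShrGood f C) (hD : ShrGood f D) {z : X}
    (hzC : z ∈ C) (hzD : z ∈ D) : ShrGood f (C ∪ D) := by
  refine ⟨hC.1.union hD.1, hC.2.1.union ⟨z, hzC, hzD⟩ hD.2.1, ?_⟩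
  have hb : ∀ n, diam (f^[n] '' (C ∪ D)) ≤ diam (f^[n] '' C) + diam (f^[n] '' D) := by
    intro n
    rw [Set.image_union]
    have h := Metric.diam_union (Set.mem_image_of_mem f^[n] hzC) (Set.mem_image_of_mem f^[n] hzD)
    simpa using h
  have hsum : Tendsto (fun n => diam (f^[n] '' C) + diam (f^[n] '' D)) atTop (𝓝 0) := by
    simpa using hC.2.2.add hD.2.2
  exact squeeze_zero (fun n => diam_nonneg) hb hsum

private lemma good_iterate {f : X → X} (hf : Continuous f) {C : Set X} (h : ShrGood f C) (m : ℕ) :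
    ShrGood f (f^[m] '' C) := by
  refine ⟨h.1.image (hf.iterate m), h.2.1.image _ ((hf.iterate m).continuousOn), ?_⟩
  have he : ∀ n, f^[n] '' (f^[m] '' C) = f^[n + m] '' C := by
    intro n
    rw [Set.image_image]
    exact Set.image_congr fun x _ => (Function.iterate_add_apply f n m x).symm
  have ht : Tendsto (fun n => diam (f^[n + m] '' C)) atTop (𝓝 0) :=
    h.2.2.comp (tendsto_add_atTop_nat m)
  simpa only [he] using ht

private lemma rel_refl (f : X → X) (x : X) : ShrRel f x x :=
  ⟨{x}, good_singleton f x, rfl, rfl⟩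

private lemma rel_symm {f : X → X} {x y : X} (h : ShrRel f x y) : ShrRel f y x := by
  obtain ⟨C, hC, hx, hy⟩ := h; exact ⟨C, hC, hy, hx⟩

private lemma rel_trans {f : X → X} {x y z : X} (h1 : ShrRel f x y) (h2 : ShrRel f y z) : ShrRel f x z := by
  obtain ⟨C, hC, hx, hy⟩ := h1
  obtain ⟨D, hD, hy', hz⟩ := h2
  exact ⟨C ∪ D, good_union hC hD hy hy', Set.mem_union_left _ hx, Set.mem_union_right _ hz⟩

private lemma rel_map {f : X → X} (hf : Continuous f) {x y : X} (h : ShrRel f x y) :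
    ShrRel f (f x) (f y) := by
  obtain ⟨C, hC, hx, hy⟩ := h
  refine ⟨f^[1] '' C, good_iterate hf hC 1, ?_, ?_⟩
  · simpa using Set.mem_image_of_mem f hx
  · simpa using Set.mem_image_of_mem f hy

end Aux
section Aux2
variable {X : Type*} [MetricSpace X] [CompactSpace X]

private lemma bnd (s : Set X) : Bornology.IsBounded s :=
  isCompact_univ.isBounded.subset (Set.subset_univ s)

private lemma no_bad_family (hFS : FinitelySuslinean X) {f : X → X} {ε : ℝ} (hε : 0 < ε)
    (F : ℕ → Set X) (x : ℕ → X)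
    (hgood : ∀ k, ShrGood f (F k)) (hmem : ∀ k, x k ∈ F k) (hdiam : ∀ k, ε ≤ diam (F k))
    (hnr : ∀ k l, k ≠ l → ¬ ShrRel f (x k) (x l)) : False := by
  have hdisj : Pairwise (Function.onFun Disjoint F) := by
    intro k l hkl
    rw [Function.onFun, Set.disjoint_left]
    intro t htk htl
    exact hnr k l hkl (rel_trans ⟨F k, hgood k, hmem k, htk⟩ ⟨F l, hgood l, htl, hmem l⟩)
  have hfin := hFS ℕ F (fun k => ⟨⟨x k, hmem k⟩, (hgood k).1, (hgood k).2.1⟩) hdisj ε hε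
  have huniv : {i : ℕ | ε ≤ diam (F i)} = Set.univ := Set.eq_univ_of_forall fun k => hdiam k
  rw [huniv] at hfin
  exact Set.infinite_univ hfin

private lemma no_periodic [ConnectedSpace X] {f : X → X} (hmin : MinimalMap f)
    (hnt : (Set.univ : Set X).Nontrivial) {w : X} {p : ℕ} (hp : 0 < p)
    (h : ShrRel f w (f^[p] w)) : False := by
  obtain ⟨C, ⟨hCc, hCconn, hCsh⟩, hw, hfw⟩ := h
  have hf : Continuous f := hmin.1
  -- every point is fixed by f^[p]
  have hfix : ∀ v : X, f^[p] v = v := by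
    have hM : (⋂ N, closure ((fun n => f^[n] w) '' (Set.Ici N))) = Set.univ := by
      set s : ℕ → Set X := fun N => (fun n => f^[n] w) '' (Set.Ici N) with hs
      have hmono : ∀ N, s (N + 1) ⊆ s N :=
        fun N => Set.image_mono (Set.Ici_subset_Ici.mpr (Nat.le_succ N))
      apply hmin.2
      · exact isClosed_iInter fun N => isClosed_closure
      · apply IsCompact.nonempty_iInter_of_sequence_nonempty_isCompact_isClosed
        · exact fun i => closure_mono (hmono i)
        · exact fun i => (Set.Nonempty.image _ ⟨i, le_refl i⟩).closure
        · exact isClosed_closure.isCompact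
        · exact fun i => isClosed_closure
      · intro v hv
        simp only [Set.mem_iInter] at hv ⊢
        intro N
        have hsub : f '' s N ⊆ s N := by
          rintro _ ⟨_, ⟨n, hn, rfl⟩, rfl⟩
          exact ⟨n + 1, le_trans hn (Nat.le_succ n), Function.iterate_succ_apply' f n w⟩
        exact closure_mono hsub (image_closure_subset_closure_image hf ⟨v, hv N, rfl⟩)
    intro v
    have hvM : ∀ N, v ∈ closure ((fun n => f^[n] w) '' (Set.Ici N)) := by
      intro N
      have : v ∈ ⋂ N, closure ((fun n => f^[n] w) '' (Set.Ici N)) := by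
        rw [hM]; exact Set.mem_univ v
      exact Set.mem_iInter.mp this N
    have key : ∀ γ : ℝ, 0 < γ → dist (f^[p] v) v < γ := by
      intro γ hγ
      obtain ⟨δ, hδ, hcont⟩ := Metric.continuous_iff.mp (hf.iterate p) v (γ/3) (by linarith)
      obtain ⟨N, hN⟩ := Metric.tendsto_atTop.mp hCsh (γ/3) (by linarith)
      obtain ⟨q, hq, hdq⟩ := Metric.mem_closure_iff.mp (hvM N) (min δ (γ/3))
        (lt_min hδ (by linarith))
      obtain ⟨n, hn, rfl⟩ := hq
      have hdn : diam (f^[n] '' C) < γ/3 := by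
        have := hN n hn
        rwa [Real.dist_eq, sub_zero, abs_of_nonneg diam_nonneg] at this
      have hmid : dist (f^[p] (f^[n] w)) (f^[n] w) ≤ diam (f^[n] '' C) := by
        apply Metric.dist_le_diam_of_mem (bnd _)
        · refine ⟨f^[p] w, hfw, ?_⟩
          rw [← Function.iterate_add_apply, ← Function.iterate_add_apply, Nat.add_comm]
        · exact ⟨w, hw, rfl⟩
      have h1 : dist (f^[p] v) (f^[p] (f^[n] w)) < γ/3 := by
        have hq1 : dist (f^[n] w) v < δ := by
          rw [dist_comm]; exact lt_of_lt_of_le hdq (min_le_left _ _)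
        rw [dist_comm]; exact hcont _ hq1
      have h3 : dist (f^[n] w) v < γ/3 := by
        rw [dist_comm]; exact lt_of_lt_of_le hdq (min_le_right _ _)
      calc dist (f^[p] v) v
          ≤ dist (f^[p] v) (f^[p] (f^[n] w)) + dist (f^[p] (f^[n] w)) (f^[n] w)
            + dist (f^[n] w) v := dist_triangle4 _ _ _ _
        _ < γ/3 + γ/3 + γ/3 := by
            apply add_lt_add (add_lt_add h1 (lt_of_le_of_lt hmid hdn)) h3
        _ = γ := by ring
    have hle : ¬ 0 < dist (f^[p] v) v := fun hpos => lt_irrefl _ (key _ hpos)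
    exact eq_of_dist_eq_zero (le_antisymm (not_lt.mp hle) dist_nonneg)
  -- X is finite, contradiction
  obtain ⟨A, -, B, -, hab⟩ := hnt
  have horb : (Set.univ : Set X) = (fun i => f^[i] A) '' (Set.Iio p) := by
    symm
    apply hmin.2
    · exact ((Set.finite_Iio p).image _).isClosed
    · exact ⟨A, 0, hp, rfl⟩
    · rintro _ ⟨i, hi, rfl⟩
      simp only [Set.mem_Iio] at hi
      by_cases hip : i + 1 < p
      · exact ⟨i + 1, hip, Function.iterate_succ_apply' f i A⟩
      · have hieq : i + 1 = p := by omega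
        refine ⟨0, hp, ?_⟩
        show f^[0] A = f (f^[i] A)
        rw [← Function.iterate_succ_apply' f i A]
        have hieq' : i.succ = p := hieq
        rw [hieq', hfix A]
        simp
  have hfinuniv : (Set.univ : Set X).Finite := by
    rw [horb]; exact (Set.finite_Iio p).image _
  have hopenA : IsOpen ({A} : Set X) := by
    have hcl : IsClosed ({A}ᶜ : Set X) := (hfinuniv.subset (Set.subset_univ _)).isClosed
    simpa using hcl.isOpen_compl
  have hAu : ({A} : Set X) = Set.univ :=
    (IsClopen.eq_univ ⟨isClosed_singleton, hopenA⟩ ⟨A, rfl⟩)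
  apply hab
  have : B ∈ ({A} : Set X) := by rw [hAu]; exact Set.mem_univ B
  exact (Set.mem_singleton_iff.mp this).symm

end Aux2
section Aux3
variable {X : Type*} [MetricSpace X] [CompactSpace X] [ConnectedSpace X]

private lemma class_shrinks (hFS : FinitelySuslinean X)
    (hnt : (Set.univ : Set X).Nontrivial) {f : X → X} (hmin : MinimalMap f) (z : X) :
    Tendsto (fun n => diam (f^[n] '' {y | ShrRel f z y})) atTop (𝓝 0) := by
  by_contra hT
  rw [Metric.tendsto_atTop] at hT
  push_neg at hT
  obtain ⟨ε, hε, hfreq⟩ := hT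
  choose h hh1 hh2 using hfreq
  have hh2' : ∀ N, ε ≤ diam (f^[h N] '' {y | ShrRel f z y}) := by
    intro N
    have := hh2 N
    rwa [Real.dist_eq, sub_zero, abs_of_nonneg diam_nonneg] at this
  set ψ : ℕ → ℕ := fun k => Nat.rec (h 0) (fun _ ih => h (ih + 1)) k with hψdef
  have hψsucc : ∀ k, ψ (k + 1) = h (ψ k + 1) := fun k => rfl
  have hψmono : StrictMono ψ := by
    apply strictMono_nat_of_lt_succ
    intro k
    rw [hψsucc k]
    exact lt_of_lt_of_le (Nat.lt_succ_self _) (hh1 (ψ k + 1))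
  have hψbig : ∀ k, ε ≤ diam (f^[ψ k] '' {y | ShrRel f z y}) := by
    intro k
    cases k with
    | zero => exact hh2' 0
    | succ k => rw [hψsucc k]; exact hh2' _
  have hbig : ∀ k, ∃ G : Set X, ShrGood f G ∧ f^[ψ k] z ∈ G ∧ ε/2 ≤ diam G := by
    intro k
    obtain ⟨aa, ha, bb, hb, hab⟩ : ∃ aa ∈ f^[ψ k] '' {y | ShrRel f z y},
        ∃ bb ∈ f^[ψ k] '' {y | ShrRel f z y}, ε/2 < dist aa bb := by
      by_contra hc
      push_neg at hc
      have := Metric.diam_le_of_forall_dist_le (by linarith) hc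
      linarith [hψbig k]
    obtain ⟨u, hu, rfl⟩ := ha
    obtain ⟨v, hv, rfl⟩ := hb
    obtain ⟨Cu, hCu, hzu, huu⟩ := hu
    obtain ⟨Cv, hCv, hzv, hvv⟩ := hv
    refine ⟨f^[ψ k] '' (Cu ∪ Cv), good_iterate hmin.1 (good_union hCu hCv hzu hzv) _,
      Set.mem_image_of_mem _ (Set.mem_union_left _ hzu), ?_⟩
    calc ε/2 ≤ dist (f^[ψ k] u) (f^[ψ k] v) := le_of_lt hab
      _ ≤ diam (f^[ψ k] '' (Cu ∪ Cv)) := Metric.dist_le_diam_of_mem (bnd _)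
          (Set.mem_image_of_mem _ (Set.mem_union_left _ huu))
          (Set.mem_image_of_mem _ (Set.mem_union_right _ hvv))
  choose G hG1 hG2 hG3 using hbig
  have hex : ∃ k l, k ≠ l ∧ ShrRel f (f^[ψ k] z) (f^[ψ l] z) := by
    by_contra hc
    push_neg at hc
    exact no_bad_family hFS (by linarith : (0:ℝ) < ε/2) G (fun k => f^[ψ k] z) hG1 hG2 hG3 hc
  obtain ⟨k, l, hkl, hrel⟩ := hex
  have final : ∀ m m' : ℕ, m < m' → ShrRel f (f^[m] z) (f^[m'] z) → False := by
    intro m m' hmm hr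
    have hp : 0 < m' - m := Nat.sub_pos_of_lt hmm
    apply no_periodic hmin hnt hp (w := f^[m] z)
    have he : f^[m' - m] (f^[m] z) = f^[m'] z := by
      rw [← Function.iterate_add_apply]
      congr 1
      omega
    rwa [he]
  rcases hkl.lt_or_gt with hlt | hgt
  · exact final _ _ (hψmono hlt) hrel
  · exact final _ _ (hψmono hgt) (rel_symm hrel)

private lemma class_conn {f : X → X} (z : X) : IsConnected {y | ShrRel f z y} := by
  refine ⟨⟨z, rel_refl f z⟩, isPreconnected_of_forall z ?_⟩
  intro y hy
  obtain ⟨C, hC, hz, hy'⟩ := hy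
  exact ⟨C, fun c hc => ⟨C, hC, hz, hc⟩, hz, hy', hC.2.1.isPreconnected⟩

private lemma class_closed (hFS : FinitelySuslinean X)
    (hnt : (Set.univ : Set X).Nontrivial) {f : X → X} (hmin : MinimalMap f) (z : X) :
    IsClosed {y | ShrRel f z y} := by
  apply isClosed_of_closure_subset
  intro q hq
  have hgood : ShrGood f (closure {y | ShrRel f z y}) := by
    refine ⟨isClosed_closure.isCompact, (class_conn z).closure, ?_⟩
    apply squeeze_zero (fun n => diam_nonneg) (fun n => ?_) (class_shrinks hFS hnt hmin z)
    calc diam (f^[n] '' closure {y | ShrRel f z y})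
        ≤ diam (closure (f^[n] '' {y | ShrRel f z y})) :=
          Metric.diam_mono (image_closure_subset_closure_image (hmin.1.iterate n)) (bnd _)
      _ = diam (f^[n] '' {y | ShrRel f z y}) := Metric.diam_closure _
  exact ⟨closure {y | ShrRel f z y}, hgood, subset_closure (rel_refl f z), hq⟩

set_option maxHeartbeats 1000000 in
private lemma rel_isClosed (hFS : FinitelySuslinean X)
    (hnt : (Set.univ : Set X).Nontrivial) {f : X → X} (hmin : MinimalMap f) :
    IsClosed {p : X × X | ShrRel f p.1 p.2} := by
  apply isClosed_of_closure_subset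
  intro pq hpq
  obtain ⟨q, hqmem, hqlim⟩ := mem_closure_iff_seq_limit.mp hpq
  obtain ⟨x, y⟩ := pq
  by_cases hxy : x = y
  · subst hxy; exact rel_refl f x
  · have hd : 0 < dist x y := dist_pos.mpr hxy
    have h1 : Tendsto (fun n => (q n).1) atTop (𝓝 x) := (continuous_fst.tendsto (x, y)).comp hqlim
    have h2 : Tendsto (fun n => (q n).2) atTop (𝓝 y) := (continuous_snd.tendsto (x, y)).comp hqlim
    obtain ⟨K1, hK1⟩ := Metric.tendsto_atTop.mp h1 (dist x y / 3) (by linarith)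
    obtain ⟨K2, hK2⟩ := Metric.tendsto_atTop.mp h2 (dist x y / 3) (by linarith)
    set K := max K1 K2 with hK
    set a : ℕ → X := fun k => (q (K + k)).1 with hadef
    set b : ℕ → X := fun k => (q (K + k)).2 with hbdef
    have hrel : ∀ k, ShrRel f (a k) (b k) := fun k => hqmem (K + k)
    have hdist : ∀ k, dist x y / 3 ≤ dist (a k) (b k) := by
      intro k
      have e1 : dist (a k) x < dist x y / 3 :=
        hK1 _ (le_trans (le_max_left _ _) (Nat.le_add_right K k))
      have e2 : dist (b k) y < dist x y / 3 :=
        hK2 _ (le_trans (le_max_right _ _) (Nat.le_add_right K k))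
      have e3 : dist x y ≤ dist x (a k) + dist (a k) (b k) + dist (b k) y := dist_triangle4 _ _ _ _
      rw [dist_comm x (a k)] at e3
      linarith
    choose C hC haC hbC using hrel
    have hCd : ∀ k, dist x y / 3 ≤ diam (C k) :=
      fun k => le_trans (hdist k) (Metric.dist_le_diam_of_mem (bnd _) (haC k) (hbC k))
    have hk0 : ∃ k0, {l | ShrRel f (a k0) (a l)}.Infinite := by
      by_contra hc
      push_neg at hc
      have hSeq : ∀ k l, ShrRel f (a k) (a l) →
          {m | ShrRel f (a k) (a m)} = {m | ShrRel f (a l) (a m)} := by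
        intro k l hrel'
        ext m
        exact ⟨fun hm => rel_trans (rel_symm hrel') hm, fun hm => rel_trans hrel' hm⟩
      set r : ℕ → ℕ := fun k => sInf {l | ShrRel f (a k) (a l)} with hrdef
      have hrk : ∀ k, ShrRel f (a k) (a (r k)) := by
        intro k
        have hmem : sInf {l | ShrRel f (a k) (a l)} ∈ {l | ShrRel f (a k) (a l)} :=
          Nat.sInf_mem ⟨k, rel_refl f (a k)⟩
        exact hmem
      have hidem : ∀ u ∈ Set.range r, r u = u := by
        rintro _ ⟨k, rfl⟩
        show sInf {m | ShrRel f (a (r k)) (a m)} = r k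
        rw [← hSeq k (r k) (hrk k)]
      have hcover : (Set.univ : Set ℕ) ⊆ ⋃ m ∈ Set.range r, {l | ShrRel f (a m) (a l)} := by
        intro k _
        exact Set.mem_biUnion ⟨k, rfl⟩ (rel_symm (hrk k))
      have hrange : (Set.range r).Infinite := by
        by_contra hfin
        rw [Set.not_infinite] at hfin
        exact Set.infinite_univ (Set.Finite.subset (Set.Finite.biUnion hfin fun m _ => hc m) hcover)
      set e := hrange.natEmbedding with hedef
      set m : ℕ → ℕ := fun i => (e i : ℕ) with hmdef
      have hmrange : ∀ i, m i ∈ Set.range r := fun i => (e i).2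
      have hminj : Function.Injective m := fun i j hij => e.injective (Subtype.ext hij)
      have hnr : ∀ i j, i ≠ j → ¬ ShrRel f (a (m i)) (a (m j)) := by
        intro i j hij hrelm
        apply hij
        apply hminj
        calc m i = r (m i) := (hidem _ (hmrange i)).symm
          _ = sInf {t | ShrRel f (a (m i)) (a t)} := rfl
          _ = sInf {t | ShrRel f (a (m j)) (a t)} := by rw [hSeq _ _ hrelm]
          _ = r (m j) := rfl
          _ = m j := hidem _ (hmrange j)
      exact no_bad_family hFS (by linarith : (0:ℝ) < dist x y / 3) (fun i => C (m i))
        (fun i => a (m i)) (fun i => hC _) (fun i => haC _) (fun i => hCd _) hnr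
    obtain ⟨k0, hk0inf⟩ := hk0
    have hPcl : IsClosed {y' | ShrRel f (a k0) y'} := class_closed hFS hnt hmin (a k0)
    have hφmono : StrictMono (Nat.nth fun l => ShrRel f (a k0) (a l)) := Nat.nth_strictMono hk0inf
    have hφmem : ∀ i, ShrRel f (a k0) (a (Nat.nth (fun l => ShrRel f (a k0) (a l)) i)) :=
      Nat.nth_mem_of_infinite hk0inf
    have ht : Tendsto (fun i => K + Nat.nth (fun l => ShrRel f (a k0) (a l)) i) atTop atTop :=
      tendsto_atTop_mono (fun i => Nat.le_add_left _ K) hφmono.tendsto_atTop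
    have hxx : ShrRel f (a k0) x := by
      apply hPcl.mem_of_tendsto (h1.comp ht)
      exact Filter.Eventually.of_forall fun i => hφmem i
    have hyy : ShrRel f (a k0) y := by
      apply hPcl.mem_of_tendsto (h2.comp ht)
      exact Filter.Eventually.of_forall fun i => rel_trans (hφmem i) ⟨C _, hC _, haC _, hbC _⟩
    exact rel_trans (rel_symm hxx) hyy

end Aux3

/-- the shrinking-continuum relation is a closed invariant monotone
equivalence relation. -/
theorem stmt11 {X : Type*} [MetricSpace X] [CompactSpace X] [ConnectedSpace X]
    (hFS : FinitelySuslinean X) (hnt : (univ : Set X).Nontrivial)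
    (f : X → X) (hmin : MinimalMap f)
    (R : X → X → Prop)
    (hR : ∀ x y, R x y ↔ ∃ C : Set X, IsCompact C ∧ IsConnected C ∧ x ∈ C ∧ y ∈ C ∧
        Tendsto (fun n => diam (f^[n] '' C)) atTop (𝓝 0)) :
    Equivalence R ∧ IsClosed {p : X × X | R p.1 p.2} ∧
      (∀ x y, R x y → R (f x) (f y)) ∧
      ∀ x : X, IsCompact {y | R x y} ∧ IsConnected {y | R x y} := by
  have hconv : ∀ x y, R x y ↔ ShrRel f x y := by
    intro x y
    rw [hR]
    constructor
    · rintro ⟨C, h1, h2, h3, h4, h5⟩; exact ⟨C, ⟨h1, h2, h5⟩, h3, h4⟩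
    · rintro ⟨C, ⟨h1, h2, h5⟩, h3, h4⟩; exact ⟨C, h1, h2, h3, h4, h5⟩
  refine ⟨⟨fun x => (hconv _ _).mpr (rel_refl f x),
      fun h => (hconv _ _).mpr (rel_symm ((hconv _ _).mp h)),
      fun h1 h2 => (hconv _ _).mpr (rel_trans ((hconv _ _).mp h1) ((hconv _ _).mp h2))⟩,
      ?_, fun x y h => (hconv _ _).mpr (rel_map hmin.1 ((hconv _ _).mp h)), fun x => ?_⟩
  · have hsetE : {p : X × X | R p.1 p.2} = {p : X × X | ShrRel f p.1 p.2} :=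
      Set.ext fun p => hconv p.1 p.2
    rw [hsetE]
    exact rel_isClosed hFS hnt hmin
  · have hset : {y | R x y} = {y | ShrRel f x y} := Set.ext fun y => hconv x y
    rw [hset]
    exact ⟨(class_closed hFS hnt hmin x).isCompact, class_conn x⟩
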